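/- Let (I_{ℛ₁}(t), I_{ℛ₂}(t), I_{ℛ₃}(t), I_{ℛ₄}(t)) be a differentiable solution of the averaged system (RA) with nonnegative components on an interval. Then the quantities I_{ℛ₁}(t) + I_{ℛ₂}(t) + I_{ℛ₃}(t) + I_{ℛ₄}(t), I_{ℛ₃}(t) + I_{ℛ₄}(t), I_{ℛ₁}(t) + I_{ℛ₂}(t), I_{ℛ₁}(t) − 2I_{ℛ₃}(t), and I_{ℛ₂}(t) − 2I_{ℛ₄}(t) are all constant in time on that interval. -/

import Mathlib

open scoped Classical BigOperators ENNReal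

noncomputable section

/-- `S = √(I_{ℛ₄} I_{ℛ₂}² I_{ℛ₃} I_{ℛ₁}²)`. -/
def RAS (I1 I2 I3 I4 : ℝ → ℝ) (t : ℝ) : ℝ :=
  Real.sqrt (I4 t * I2 t ^ 2 * I3 t * I1 t ^ 2)

/-- `(I_{ℛ₁}, I_{ℛ₂}, I_{ℛ₃}, I_{ℛ₄})` solves the averaged system (RA) on the time set `s`:
`İ_{ℛ₁} = −(12/L³)S`, `İ_{ℛ₂} = (12/L³)S`, `İ_{ℛ₃} = −(6/L³)S`, `İ_{ℛ₄} = (6/L³)S`. -/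
def IsRASolutionOn (L : ℝ) (I1 I2 I3 I4 : ℝ → ℝ) (s : Set ℝ) : Prop :=
  ∀ t ∈ s,
    HasDerivAt I1 (-(12 / L ^ 3 * RAS I1 I2 I3 I4 t)) t ∧
    HasDerivAt I2 (12 / L ^ 3 * RAS I1 I2 I3 I4 t) t ∧
    HasDerivAt I3 (-(6 / L ^ 3 * RAS I1 I2 I3 I4 t)) t ∧
    HasDerivAt I4 (6 / L ^ 3 * RAS I1 I2 I3 I4 t) t

/-- Conserved quantities of the averaged system (RA). -/
theorem stmt_8 (L : ℝ) (hL : 0 < L) (a b : ℝ) (I1 I2 I3 I4 : ℝ → ℝ)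
    (hsol : IsRASolutionOn L I1 I2 I3 I4 (Set.Ioo a b))
    (hnn : ∀ t ∈ Set.Ioo a b, 0 ≤ I1 t ∧ 0 ≤ I2 t ∧ 0 ≤ I3 t ∧ 0 ≤ I4 t) :
    ∀ t₁ ∈ Set.Ioo a b, ∀ t₂ ∈ Set.Ioo a b,
      I1 t₁ + I2 t₁ + I3 t₁ + I4 t₁ = I1 t₂ + I2 t₂ + I3 t₂ + I4 t₂ ∧
      I3 t₁ + I4 t₁ = I3 t₂ + I4 t₂ ∧
      I1 t₁ + I2 t₁ = I1 t₂ + I2 t₂ ∧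
      I1 t₁ - 2 * I3 t₁ = I1 t₂ - 2 * I3 t₂ ∧
      I2 t₁ - 2 * I4 t₁ = I2 t₂ - 2 * I4 t₂ := by
  intro t₁ h₁ t₂ h₂
  have key : ∀ f : ℝ → ℝ, (∀ t ∈ Set.Ioo a b, HasDerivAt f 0 t) → f t₁ = f t₂ := by
    intro f hf
    refine (convex_Ioo a b).is_const_of_fderivWithin_eq_zero
      (fun t ht => (hf t ht).differentiableAt.differentiableWithinAt) (fun t ht => ?_) h₁ h₂
    rw [fderivWithin_of_isOpen isOpen_Ioo ht, (hf t ht).hasFDerivAt.fderiv]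
    ext x; simp
  refine ⟨key (fun t => I1 t + I2 t + I3 t + I4 t) (fun t ht => ?_),
    key (fun t => I3 t + I4 t) (fun t ht => ?_),
    key (fun t => I1 t + I2 t) (fun t ht => ?_),
    key (fun t => I1 t - 2 * I3 t) (fun t ht => ?_),
    key (fun t => I2 t - 2 * I4 t) (fun t ht => ?_)⟩ <;>
    obtain ⟨d1, d2, d3, d4⟩ := hsol t ht
  · have h := ((d1.add d2).add d3).add d4; exact h.congr_deriv (by ring)
  · have h := d3.add d4; exact h.congr_deriv (by ring)
  · have h := d1.add d2; exact h.congr_deriv (by ring)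
  · have h := d1.sub (d3.const_mul 2); exact h.congr_deriv (by ring)
  · have h := d2.sub (d4.const_mul 2); exact h.congr_deriv (by ring)
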